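/- Let x₁,…,x_n be observations, σ², δ² > 0, μ ∈ ℝ, and let P₁ = N(x̄, σ²/n) (posterior under uniform prior) and P₂ = N(b/a, 1/a) with a = n/σ² + 1/δ² and b = x̄ n/σ² + μ/δ² (posterior under N(μ,δ²) prior). Then σ²|x̄ − μ|/(nδ² + σ²) ≤ d_W(P₁, P₂) ≤ σ²|x̄ − μ|/(nδ² + σ²) + (√2/√π) σ³/(nδ√(nδ² + σ²)). -/

import Mathlib

open MeasureTheory ProbabilityTheory Real Set Filter
open scoped ENNReal NNReal

noncomputable section WassersteinAux

lemma integral_Ioi_mul_exp_neg_mul_sq {b : ℝ} (hb : 0 < b) :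
    ∫ x in Ioi (0:ℝ), x * rexp (-b * x ^ 2) = (2 * b)⁻¹ := by
  have A : ∀ x : ℝ, HasDerivAt (fun x => -(2*b)⁻¹ * rexp (-b * x^2))
      (x * rexp (-b * x^2)) x := by
    intro x
    convert (((hasDerivAt_pow 2 x).const_mul (-b)).exp.const_mul (-(2*b)⁻¹)) using 1
    iterate 2 rfl
    field_simp
    ring
  have B : Tendsto (fun y : ℝ => -(2*b)⁻¹ * rexp (-b * y^2)) atTop (nhds (-(2*b)⁻¹ * 0)) := by
    refine Tendsto.const_mul _ ?_
    apply Real.tendsto_exp_atBot.comp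
    exact (tendsto_pow_atTop two_ne_zero).const_mul_atTop_of_neg (neg_lt_zero.2 hb)
  have := integral_Ioi_of_hasDerivAt_of_tendsto' (a := 0) (fun x _ => A x)
    (integrable_mul_exp_neg_mul_sq hb).integrableOn B
  simpa using this

lemma integral_abs_mul_exp_neg_mul_sq {b : ℝ} (hb : 0 < b) :
    ∫ x : ℝ, |x| * rexp (-b * x ^ 2) = b⁻¹ := by
  have h := integral_comp_abs (f := fun x => x * rexp (-b * x ^ 2))
  have h2 : ∀ x : ℝ, |x| * rexp (-b * |x| ^ 2) = |x| * rexp (-b * x ^ 2) := by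
    intro x; rw [sq_abs]
  simp only [h2] at h
  rw [h, integral_Ioi_mul_exp_neg_mul_sq hb]
  field_simp

lemma gaussianPDF_eq_coe_toNNReal (m : ℝ) (v : ℝ≥0) :
    gaussianPDF m v = fun x => ((gaussianPDFReal m v x).toNNReal : ℝ≥0∞) := rfl

lemma integral_gaussianReal_eq (m : ℝ) {v : ℝ≥0} (hv : v ≠ 0) (f : ℝ → ℝ) :
    ∫ x, f x ∂(gaussianReal m v) = ∫ x, gaussianPDFReal m v x * f x := by
  rw [gaussianReal_of_var_ne_zero m hv, gaussianPDF_eq_coe_toNNReal,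
    integral_withDensity_eq_integral_smul (measurable_gaussianPDFReal m v).real_toNNReal f]
  congr 1
  funext x
  rw [NNReal.smul_def, smul_eq_mul, Real.coe_toNNReal _ (gaussianPDFReal_nonneg m v x)]

lemma integrable_gaussianReal_iff (m : ℝ) {v : ℝ≥0} (hv : v ≠ 0) (f : ℝ → ℝ) :
    Integrable f (gaussianReal m v) ↔ Integrable (fun x => gaussianPDFReal m v x * f x) := by
  rw [gaussianReal_of_var_ne_zero m hv, gaussianPDF_eq_coe_toNNReal,
    integrable_withDensity_iff_integrable_smul (measurable_gaussianPDFReal m v).real_toNNReal]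
  refine integrable_congr (Filter.Eventually.of_forall fun x => ?_)
  show (gaussianPDFReal m v x).toNNReal • f x = gaussianPDFReal m v x * f x
  rw [NNReal.smul_def, smul_eq_mul, Real.coe_toNNReal _ (gaussianPDFReal_nonneg m v x)]

lemma gaussianPDFReal_std (x : ℝ) :
    gaussianPDFReal 0 1 x = (Real.sqrt (2 * π))⁻¹ * rexp (-(1/2) * x ^ 2) := by
  simp only [gaussianPDFReal, NNReal.coe_one, mul_one, sub_zero]
  ring_nf

lemma integrable_abs_std : Integrable (fun x => |x|) (gaussianReal 0 1) := by
  rw [integrable_gaussianReal_iff 0 one_ne_zero]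
  have h := ((integrable_mul_exp_neg_mul_sq (b := 1/2) (by norm_num)).abs).const_mul
    (Real.sqrt (2 * π))⁻¹
  refine h.congr (Filter.Eventually.of_forall fun x => ?_)
  simp only [gaussianPDFReal_std, abs_mul, Real.abs_exp]
  ring

lemma integrable_id_std : Integrable (fun x : ℝ => x) (gaussianReal 0 1) := by
  refine integrable_abs_std.mono' measurable_id.aestronglyMeasurable ?_
  exact Filter.Eventually.of_forall fun x => le_of_eq (Real.norm_eq_abs x)

lemma integral_abs_std : ∫ x, |x| ∂(gaussianReal 0 1) = Real.sqrt 2 / Real.sqrt π := by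
  rw [integral_gaussianReal_eq 0 one_ne_zero]
  have : ∀ x : ℝ, gaussianPDFReal 0 1 x * |x|
      = (Real.sqrt (2 * π))⁻¹ * (|x| * rexp (-(1/2) * x ^ 2)) := by
    intro x; rw [gaussianPDFReal_std]; ring
  simp only [this]
  rw [integral_const_mul, integral_abs_mul_exp_neg_mul_sq (by norm_num : (0:ℝ) < 1/2)]
  rw [Real.sqrt_mul (by norm_num : (0:ℝ) ≤ 2)]
  have h2 : Real.sqrt 2 * Real.sqrt 2 = 2 := Real.mul_self_sqrt (by norm_num)
  have hπ : (0:ℝ) < Real.sqrt π := Real.sqrt_pos.mpr Real.pi_pos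
  field_simp
  nlinarith [h2, hπ]

lemma integral_id_std : ∫ x, x ∂(gaussianReal 0 1) = 0 := by
  rw [integral_gaussianReal_eq 0 one_ne_zero]
  have hodd : ∀ x : ℝ, gaussianPDFReal 0 1 (-x) * (-x) = -(gaussianPDFReal 0 1 x * x) := by
    intro x
    rw [gaussianPDFReal_std, gaussianPDFReal_std, neg_sq]
    ring
  have h := integral_neg_eq_self (fun x : ℝ => gaussianPDFReal 0 1 x * x) volume
  simp only [hodd, integral_neg] at h
  linarith

lemma gaussianReal_eq_map (m : ℝ) (v : ℝ≥0) :
    gaussianReal m v = (gaussianReal 0 1).map (fun z => Real.sqrt v * z + m) := by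
  have h1 : (gaussianReal 0 1).map (fun z => Real.sqrt v * z) = gaussianReal 0 v := by
    rw [show (fun z : ℝ => Real.sqrt v * z) = (Real.sqrt v * ·) from rfl,
      gaussianReal_map_const_mul]
    congr 1
    · ring
    · ext
      simp [Real.sq_sqrt (v.coe_nonneg)]
  have h2 : (fun z : ℝ => Real.sqrt v * z + m) = (· + m) ∘ (fun z => Real.sqrt v * z) := rfl
  rw [h2, ← Measure.map_map (measurable_add_const m) (measurable_const_mul _), h1,
    gaussianReal_map_add_const, zero_add]

lemma integral_gaussianReal_comp (m : ℝ) (v : ℝ≥0) (h : ℝ → ℝ) (hh : Continuous h) :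
    ∫ θ, h θ ∂(gaussianReal m v) = ∫ z, h (Real.sqrt v * z + m) ∂(gaussianReal 0 1) := by
  rw [gaussianReal_eq_map m v,
    integral_map (by fun_prop) hh.aestronglyMeasurable]

lemma integrable_lip_comp (m : ℝ) (s : ℝ) (hs : 0 ≤ s) {h : ℝ → ℝ} (hh : LipschitzWith 1 h) :
    Integrable (fun z => h (s * z + m)) (gaussianReal 0 1) := by
  have hb : Integrable (fun z : ℝ => |h m| + s * |z|) (gaussianReal 0 1) :=
    (integrable_const _).add (integrable_abs_std.const_mul s)
  refine hb.mono' ((hh.continuous.comp (by continuity)).aestronglyMeasurable)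
    (Filter.Eventually.of_forall fun z => ?_)
  rw [Real.norm_eq_abs]
  have h1 : |h (s * z + m) - h m| ≤ |s * z + m - m| := by
    have := hh.dist_le_mul (s * z + m) m
    simp only [Real.dist_eq, NNReal.coe_one, one_mul] at this
    simpa using this
  have h2 : |s * z + m - m| = s * |z| := by
    rw [add_sub_cancel_right, abs_mul, abs_of_nonneg hs]
  calc |h (s * z + m)| ≤ |h m| + |h (s * z + m) - h m| := by
        linarith [abs_sub_abs_le_abs_sub (h (s*z+m)) (h m)]
    _ ≤ |h m| + |s * z + m - m| := by linarith
    _ = |h m| + s * |z| := by rw [h2]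

lemma mean_gaussianReal (m : ℝ) (v : ℝ≥0) :
    ∫ θ, θ ∂(gaussianReal m v) = m := by
  rw [integral_gaussianReal_comp m v (fun θ => θ) continuous_id]
  have : ∫ z, (Real.sqrt v * z + m) ∂(gaussianReal 0 1)
      = Real.sqrt v * (∫ z, z ∂(gaussianReal 0 1)) + m := by
    rw [integral_add (integrable_id_std.const_mul _) (integrable_const _),
      integral_const_mul, integral_const]
    simp
  rw [this, integral_id_std, mul_zero, zero_add]

lemma key_bound (m₁ m₂ : ℝ) (v₁ v₂ : ℝ≥0) {h : ℝ → ℝ} (hh : LipschitzWith 1 h) :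
    |(∫ θ, h θ ∂(gaussianReal m₂ v₂)) - ∫ θ, h θ ∂(gaussianReal m₁ v₁)|
      ≤ |m₂ - m₁| + |Real.sqrt v₂ - Real.sqrt v₁| * (Real.sqrt 2 / Real.sqrt π) := by
  set s₁ := Real.sqrt (v₁ : ℝ)
  set s₂ := Real.sqrt (v₂ : ℝ)
  have hs₁ : 0 ≤ s₁ := Real.sqrt_nonneg _
  have hs₂ : 0 ≤ s₂ := Real.sqrt_nonneg _
  have hi₁ := integrable_lip_comp m₁ s₁ hs₁ hh
  have hi₂ := integrable_lip_comp m₂ s₂ hs₂ hh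
  rw [integral_gaussianReal_comp m₁ v₁ h hh.continuous,
    integral_gaussianReal_comp m₂ v₂ h hh.continuous, ← integral_sub hi₂ hi₁]
  have hptw : ∀ z : ℝ, |h (s₂ * z + m₂) - h (s₁ * z + m₁)|
      ≤ |m₂ - m₁| + |s₂ - s₁| * |z| := by
    intro z
    have := hh.dist_le_mul (s₂ * z + m₂) (s₁ * z + m₁)
    simp only [Real.dist_eq, NNReal.coe_one, one_mul] at this
    refine this.trans ?_
    have : s₂ * z + m₂ - (s₁ * z + m₁) = (s₂ - s₁) * z + (m₂ - m₁) := by ring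
    rw [this]
    calc |(s₂ - s₁) * z + (m₂ - m₁)| ≤ |(s₂ - s₁) * z| + |m₂ - m₁| := abs_add_le _ _
      _ = |m₂ - m₁| + |s₂ - s₁| * |z| := by rw [abs_mul]; ring
  have hbint : Integrable (fun z : ℝ => |m₂ - m₁| + |s₂ - s₁| * |z|) (gaussianReal 0 1) :=
    (integrable_const _).add (integrable_abs_std.const_mul _)
  calc |∫ z, (h (s₂ * z + m₂) - h (s₁ * z + m₁)) ∂(gaussianReal 0 1)|
      ≤ ∫ z, |h (s₂ * z + m₂) - h (s₁ * z + m₁)| ∂(gaussianReal 0 1) := by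
        simpa [Real.norm_eq_abs] using norm_integral_le_integral_norm
          (μ := gaussianReal 0 1) (fun z => h (s₂ * z + m₂) - h (s₁ * z + m₁))
    _ ≤ ∫ z, (|m₂ - m₁| + |s₂ - s₁| * |z|) ∂(gaussianReal 0 1) :=
        integral_mono (hi₂.sub hi₁).abs hbint hptw
    _ = |m₂ - m₁| + |s₂ - s₁| * (Real.sqrt 2 / Real.sqrt π) := by
        rw [integral_add (integrable_const _) (integrable_abs_std.const_mul _),
          integral_const, integral_const_mul, integral_abs_std]
        simp


end WassersteinAux

/-- Bounds on the Wasserstein distance between the normal posteriors under a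
uniform prior, `N(x̄, σ²/n)`, and under a `N(μ,δ²)` prior, `N(b/a, 1/a)` with
`a = n/σ² + 1/δ²` and `b = x̄n/σ² + μ/δ²`. -/
theorem wasserstein_normal_posteriors
    (n : ℕ) (hn : 1 ≤ n) (x : Fin n → ℝ) (σ δ μ : ℝ) (hσ : 0 < σ) (hδ : 0 < δ)
    (xbar : ℝ) (hxbar : xbar = (∑ i, x i) / n)
    (a b : ℝ) (ha : a = n / σ ^ 2 + 1 / δ ^ 2)
    (hb : b = xbar * n / σ ^ 2 + μ / δ ^ 2)
    (P₁ P₂ : Measure ℝ)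
    (hP₁ : P₁ = gaussianReal xbar (σ ^ 2 / n).toNNReal)
    (hP₂ : P₂ = gaussianReal (b / a) (1 / a).toNNReal)
    (W : ℝ)
    (hW : IsLUB {d : ℝ | ∃ h : ℝ → ℝ, LipschitzWith 1 h ∧
        d = |(∫ θ, h θ ∂P₂) - ∫ θ, h θ ∂P₁|} W) :
    σ ^ 2 * |xbar - μ| / (n * δ ^ 2 + σ ^ 2) ≤ W
    ∧ W ≤ σ ^ 2 * |xbar - μ| / (n * δ ^ 2 + σ ^ 2)
        + Real.sqrt 2 / Real.sqrt Real.pi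
          * σ ^ 3 / (n * δ * Real.sqrt (n * δ ^ 2 + σ ^ 2)) := by
  have hN : (0:ℝ) < n := by exact_mod_cast Nat.lt_of_lt_of_le Nat.zero_lt_one hn
  have hσ2 : (0:ℝ) < σ^2 := by positivity
  have hδ2 : (0:ℝ) < δ^2 := by positivity
  have hD : (0:ℝ) < (n:ℝ) * δ^2 + σ^2 := by positivity
  have hapos : 0 < a := by rw [ha]; positivity
  have ha' : a = ((n:ℝ) * δ^2 + σ^2) / (σ^2 * δ^2) := by
    rw [ha]; field_simp
  have hmean : b / a - xbar = σ^2 * (μ - xbar) / ((n:ℝ) * δ^2 + σ^2) := by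
    rw [hb, ha']
    field_simp
    ring
  have habs : |b/a - xbar| = σ^2 * |xbar - μ| / ((n:ℝ) * δ^2 + σ^2) := by
    rw [hmean, abs_div, abs_of_pos hD, abs_mul, abs_of_pos hσ2, abs_sub_comm]
  have hv1 : (((σ^2/(n:ℝ)).toNNReal : ℝ≥0) : ℝ) = σ^2/(n:ℝ) :=
    Real.coe_toNNReal _ (by positivity)
  have hv2 : (((1/a).toNNReal : ℝ≥0) : ℝ) = 1/a :=
    Real.coe_toNNReal _ (by positivity)
  constructor
  · have hmem : |(∫ θ, θ ∂P₂) - ∫ θ, θ ∂P₁| ∈ {d : ℝ | ∃ h : ℝ → ℝ, LipschitzWith 1 h ∧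
        d = |(∫ θ, h θ ∂P₂) - ∫ θ, h θ ∂P₁|} := ⟨fun θ => θ, LipschitzWith.id, rfl⟩
    have hle := hW.1 hmem
    rwa [hP₁, hP₂, mean_gaussianReal, mean_gaussianReal,
      habs] at hle
  · refine hW.2 ?_
    rintro d ⟨h, hh, rfl⟩
    rw [hP₁, hP₂]
    refine (key_bound xbar (b/a) _ _ hh).trans ?_
    rw [habs, hv1, hv2]
    refine add_le_add_right ?_ _
    -- bound the sqrt difference
    set s := Real.sqrt (n:ℝ) with hs
    set r := Real.sqrt ((n:ℝ)*δ^2+σ^2) with hr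
    have hspos : 0 < s := Real.sqrt_pos.mpr hN
    have hrpos : 0 < r := Real.sqrt_pos.mpr hD
    have hs2 : s^2 = (n:ℝ) := Real.sq_sqrt hN.le
    have hr2 : r^2 = (n:ℝ)*δ^2+σ^2 := Real.sq_sqrt hD.le
    have h1 : Real.sqrt (σ^2/(n:ℝ)) = σ / s := by
      rw [Real.sqrt_div (sq_nonneg σ), Real.sqrt_sq hσ.le]
    have hinva : 1/a = (σ*δ)^2 / ((n:ℝ)*δ^2+σ^2) := by
      rw [ha']; field_simp
    have h2 : Real.sqrt (1/a) = σ*δ / r := by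
      rw [hinva, Real.sqrt_div (sq_nonneg _), Real.sqrt_sq (by positivity)]
    have hle : s * δ ≤ r := by
      have hsd : s * δ = Real.sqrt ((n:ℝ)*δ^2) := by
        rw [Real.sqrt_mul hN.le, Real.sqrt_sq hδ.le]
      rw [hsd, hr]
      exact Real.sqrt_le_sqrt (by nlinarith)
    have habs2 : |σ*δ/r - σ/s| = σ/s - σ*δ/r := by
      rw [abs_sub_comm, abs_of_nonneg]
      rw [sub_nonneg, div_le_div_iff₀ hrpos hspos]
      nlinarith [hle, hσ]
    have hσ3 : σ^3 = σ * (r^2 - s^2*δ^2) := by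
      rw [hr2, hs2]; ring
    have hfin : σ/s - σ*δ/r ≤ σ^3/((n:ℝ)*δ*r) := by
      rw [← hs2, div_sub_div _ _ (ne_of_gt hspos) (ne_of_gt hrpos),
        div_le_div_iff₀ (by positivity) (by positivity), hσ3]
      have hkey : σ * (r ^ 2 - s ^ 2 * δ ^ 2) * (s * r) - (σ * r - s * (σ * δ)) * (s ^ 2 * δ * r)
          = σ * s * r * r * (r - s * δ) := by ring
      have hP : 0 ≤ σ * s * r * r * (r - s * δ) :=
        mul_nonneg (by positivity) (sub_nonneg.2 hle)
      linarith [hkey, hP]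
    have hsqrtpos : (0:ℝ) ≤ Real.sqrt 2 / Real.sqrt Real.pi := by positivity
    calc |Real.sqrt (1/a) - Real.sqrt (σ^2/(n:ℝ))| * (Real.sqrt 2 / Real.sqrt Real.pi)
        = (σ/s - σ*δ/r) * (Real.sqrt 2 / Real.sqrt Real.pi) := by rw [h1, h2, habs2]
      _ ≤ (σ^3/((n:ℝ)*δ*r)) * (Real.sqrt 2 / Real.sqrt Real.pi) :=
          mul_le_mul_of_nonneg_right hfin hsqrtpos
      _ = Real.sqrt 2 / Real.sqrt Real.pi * σ ^ 3 / ((n:ℝ) * δ * r) := by ring
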